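/- arXiv:0707.4558 — 6 statements merged into one kernel-verified Lean document; each statement's English description precedes it below -/
import Mathlib

section
/- If a positive definite symmetric real 3×3 matrix Σ = (σ_ij) satisfies σ_12·σ_33 − σ_13·σ_23 = 0 and σ_13·σ_22 − σ_12·σ_23 = 0, then σ_12 = 0 and σ_13 = 0. -/
theorem gaussoid_axiom_b (S : Matrix (Fin 3) (Fin 3) ℝ)
    (hsymm : S.IsSymm) (hpd : S.PosDef)
    (h1 : S 0 1 * S 2 2 - S 0 2 * S 1 2 = 0)
    (h2 : S 0 2 * S 1 1 - S 0 1 * S 1 2 = 0) :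
    S 0 1 = 0 ∧ S 0 2 = 0 := by
  have hs12 : S 2 1 = S 1 2 := by
    have := congrFun (congrFun hsymm 1) 2
    simpa [Matrix.transpose_apply] using this
  -- σ22 > 0
  have h22 : 0 < S 1 1 := by
    have h := hpd.dotProduct_mulVec_pos (x := fun i => if i = 1 then 1 else 0) (by
      intro h; have := congrFun h 1; simp at this)
    simpa [Matrix.mulVec, dotProduct, Fin.sum_univ_three] using h
  have h33 : 0 < S 2 2 := by
    have h := hpd.dotProduct_mulVec_pos (x := fun i => if i = 2 then 1 else 0) (by
      intro h; have := congrFun h 2; simp at this)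
    simpa [Matrix.mulVec, dotProduct, Fin.sum_univ_three] using h
  -- 2x2 minor positive
  have hminor : 0 < S 1 1 * S 2 2 - S 1 2 * S 1 2 := by
    have h := hpd.dotProduct_mulVec_pos (x := fun i => if i = 1 then S 1 2 else if i = 2 then - S 1 1 else 0) (by
      intro h; have := congrFun h 2; simp at this; linarith)
    simp [Matrix.mulVec, dotProduct, Fin.sum_univ_three, hs12] at h
    nlinarith
  have key : S 0 1 * S 0 2 = 0 := by
    have : S 0 1 * S 0 2 * (S 1 1 * S 2 2 - S 1 2 * S 1 2) = 0 := by linear_combination (S 0 2 * S 1 1) * h1 + (S 0 2 * S 1 2) * h2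
    rcases mul_eq_zero.mp this with h | h
    · exact h
    · linarith
  rcases mul_eq_zero.mp key with h | h
  · refine ⟨h, ?_⟩
    have : S 0 2 * S 1 1 = 0 := by rw [h] at h2; linarith
    rcases mul_eq_zero.mp this with h' | h'
    · exact h'
    · linarith
  · refine ⟨?_, h⟩
    have : S 0 1 * S 2 2 = 0 := by rw [h] at h1; linarith
    rcases mul_eq_zero.mp this with h' | h'
    · exact h'
    · linarith
end

section
/- Let Σ = (σ_ij) be a positive definite symmetric real 5×5 matrix satisfying the five equations σ_12·σ_33 − σ_13·σ_23 = 0, σ_23·σ_44 − σ_24·σ_34 = 0, σ_34·σ_55 − σ_35·σ_45 = 0, σ_45·σ_11 − σ_14·σ_15 = 0, and σ_15·σ_22 − σ_25·σ_12 = 0. Then σ_12 = σ_23 = σ_34 = σ_45 = σ_15 = 0. -/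
lemma gci_diag_pos {n : Type*} [Fintype n] [DecidableEq n] (S : Matrix n n ℝ)
    (hpd : S.PosDef) (i : n) : 0 < S i i := by
  have := hpd.dotProduct_mulVec_pos (x := Pi.single i 1) (by simpa [Function.ne_iff] using ⟨i, by simp⟩)
  simpa [dotProduct, Matrix.mulVec, Pi.single_apply] using this

lemma gci_minor {n : Type*} [Fintype n] [DecidableEq n] (S : Matrix n n ℝ)
    (hpd : S.PosDef) (hsymm : S.IsSymm) {i j : n} (hij : i ≠ j) :
    S i j ^ 2 < S i i * S j j := by
  have hii := gci_diag_pos S hpd i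
  have hji : S j i = S i j := hsymm.apply i j
  have hx : (Pi.single i (S i j) - Pi.single j (S i i) : n → ℝ) ≠ 0 := by
    intro h
    have := congrFun h j
    simp [Pi.single_apply, hij, Ne.symm hij] at this
    linarith
  have key := hpd.dotProduct_mulVec_pos hx
  simp only [star_trivial, dotProduct, Matrix.mulVec, Pi.sub_apply,
    Pi.single_apply, mul_sub, sub_mul, mul_ite, ite_mul, zero_mul, mul_zero,
    Finset.sum_sub_distrib, Finset.sum_ite_eq', Finset.mem_univ, if_true] at key
  rw [hji] at key
  nlinarith [key, hii, mul_pos hii hii]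

theorem gci_pentagon (S : Matrix (Fin 5) (Fin 5) ℝ)
    (hsymm : S.IsSymm) (hpd : S.PosDef)
    (h12 : S 0 1 * S 2 2 - S 0 2 * S 1 2 = 0)
    (h23 : S 1 2 * S 3 3 - S 1 3 * S 2 3 = 0)
    (h34 : S 2 3 * S 4 4 - S 2 4 * S 3 4 = 0)
    (h45 : S 3 4 * S 0 0 - S 0 3 * S 0 4 = 0)
    (h51 : S 0 4 * S 1 1 - S 1 4 * S 0 1 = 0) :
    S 0 1 = 0 ∧ S 1 2 = 0 ∧ S 2 3 = 0 ∧ S 3 4 = 0 ∧ S 0 4 = 0 := by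
  have d0 := gci_diag_pos S hpd 0
  have d1 := gci_diag_pos S hpd 1
  have d2 := gci_diag_pos S hpd 2
  have d3 := gci_diag_pos S hpd 3
  have d4 := gci_diag_pos S hpd 4
  have ha : S 0 1 = 0 := by
    by_contra ha
    -- all cycle entries are nonzero
    have hb : S 1 2 ≠ 0 := fun hb => ha (by
      have : S 0 1 * S 2 2 = 0 := by rw [hb] at h12; linarith [h12]
      exact (mul_eq_zero.mp this).resolve_right (ne_of_gt d2))
    have hc : S 2 3 ≠ 0 := fun hc => hb (by
      have : S 1 2 * S 3 3 = 0 := by rw [hc] at h23; linarith [h23]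
      exact (mul_eq_zero.mp this).resolve_right (ne_of_gt d3))
    have hd : S 3 4 ≠ 0 := fun hd => hc (by
      have : S 2 3 * S 4 4 = 0 := by rw [hd] at h34; linarith [h34]
      exact (mul_eq_zero.mp this).resolve_right (ne_of_gt d4))
    have he : S 0 4 ≠ 0 := fun he => hd (by
      have : S 3 4 * S 0 0 = 0 := by rw [he] at h45; linarith [h45]
      exact (mul_eq_zero.mp this).resolve_right (ne_of_gt d0))
    have hne : S 0 1 * S 1 2 * S 2 3 * S 3 4 * S 0 4 ≠ 0 :=
      mul_ne_zero (mul_ne_zero (mul_ne_zero (mul_ne_zero ha hb) hc) hd) he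
    have e1 : S 0 1 * S 2 2 = S 0 2 * S 1 2 := by linarith
    have e2 : S 1 2 * S 3 3 = S 1 3 * S 2 3 := by linarith
    have e3 : S 2 3 * S 4 4 = S 2 4 * S 3 4 := by linarith
    have e4 : S 3 4 * S 0 0 = S 0 3 * S 0 4 := by linarith
    have e5 : S 0 4 * S 1 1 = S 1 4 * S 0 1 := by linarith
    have hprod : (S 0 1 * S 2 2) * ((S 1 2 * S 3 3) * ((S 2 3 * S 4 4) *
        ((S 3 4 * S 0 0) * (S 0 4 * S 1 1)))) =
        (S 0 2 * S 1 2) * ((S 1 3 * S 2 3) * ((S 2 4 * S 3 4) *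
        ((S 0 3 * S 0 4) * (S 1 4 * S 0 1)))) := by
      rw [e1, e2, e3, e4, e5]
    have hP : S 0 0 * S 1 1 * S 2 2 * S 3 3 * S 4 4 =
        S 0 2 * S 1 3 * S 2 4 * S 0 3 * S 1 4 := by
      apply mul_left_cancel₀ hne
      linear_combination hprod
    have m1 : S 0 2 ^ 2 < S 0 0 * S 2 2 := gci_minor S hpd hsymm (by decide)
    have m2 : S 1 3 ^ 2 < S 1 1 * S 3 3 := gci_minor S hpd hsymm (by decide)
    have m3 : S 2 4 ^ 2 < S 2 2 * S 4 4 := gci_minor S hpd hsymm (by decide)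
    have m4 : S 0 3 ^ 2 < S 0 0 * S 3 3 := gci_minor S hpd hsymm (by decide)
    have m5 : S 1 4 ^ 2 < S 1 1 * S 4 4 := gci_minor S hpd hsymm (by decide)
    have q1 := mul_lt_mul'' m1 m2 (sq_nonneg _) (sq_nonneg _)
    have q2 := mul_lt_mul'' q1 m3 (mul_nonneg (sq_nonneg _) (sq_nonneg _)) (sq_nonneg _)
    have q3 := mul_lt_mul'' q2 m4
      (mul_nonneg (mul_nonneg (sq_nonneg _) (sq_nonneg _)) (sq_nonneg _)) (sq_nonneg _)
    have q4 := mul_lt_mul'' q3 m5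
      (mul_nonneg (mul_nonneg (mul_nonneg (sq_nonneg _) (sq_nonneg _)) (sq_nonneg _))
        (sq_nonneg _)) (sq_nonneg _)
    have hfin : (S 0 0 * S 1 1 * S 2 2 * S 3 3 * S 4 4) ^ 2 <
        (S 0 0 * S 1 1 * S 2 2 * S 3 3 * S 4 4) ^ 2 := by
      calc (S 0 0 * S 1 1 * S 2 2 * S 3 3 * S 4 4) ^ 2
          = S 0 2 ^ 2 * S 1 3 ^ 2 * S 2 4 ^ 2 * S 0 3 ^ 2 * S 1 4 ^ 2 := by
            rw [hP]; ring
        _ < S 0 0 * S 2 2 * (S 1 1 * S 3 3) * (S 2 2 * S 4 4) * (S 0 0 * S 3 3) *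
            (S 1 1 * S 4 4) := q4
        _ = (S 0 0 * S 1 1 * S 2 2 * S 3 3 * S 4 4) ^ 2 := by ring
    exact absurd hfin (lt_irrefl _)
  -- propagate zero around the cycle
  have he : S 0 4 = 0 := by
    have : S 0 4 * S 1 1 = 0 := by rw [ha] at h51; linarith
    exact (mul_eq_zero.mp this).resolve_right (ne_of_gt d1)
  have hd : S 3 4 = 0 := by
    have : S 3 4 * S 0 0 = 0 := by rw [he] at h45; linarith
    exact (mul_eq_zero.mp this).resolve_right (ne_of_gt d0)
  have hc : S 2 3 = 0 := by
    have : S 2 3 * S 4 4 = 0 := by rw [hd] at h34; linarith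
    exact (mul_eq_zero.mp this).resolve_right (ne_of_gt d4)
  have hb : S 1 2 = 0 := by
    have : S 1 2 * S 3 3 = 0 := by rw [hc] at h23; linarith
    exact (mul_eq_zero.mp this).resolve_right (ne_of_gt d3)
  exact ⟨ha, hb, hc, hd, he⟩
end

section
/- Let Σ be a real symmetric positive definite n×n matrix, K a subset of {1,…,n}, and i, j distinct indices not in K. Then det(Σ_{K∪{i}})·det(Σ_{K∪{j}}) ≥ det(Σ_{K∪{i,j}})·det(Σ_K), where Σ_S denotes the principal submatrix with rows and columns indexed by S. -/
open Matrix in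
lemma posDef_submatrix_of_injective {l m : Type*} [Fintype l] [Fintype m]
    {M : Matrix m m ℝ} (hM : M.PosDef) (e : l → m) (he : Function.Injective e) :
    (M.submatrix e e).PosDef := by
  classical
  refine Matrix.PosDef.of_dotProduct_mulVec_pos ?_ ?_
  · have h1 := hM.1
    rw [Matrix.IsHermitian, Matrix.conjTranspose_submatrix, h1]
  · intro x hx
    set y : m → ℝ := fun k => ∑ a : l, if e a = k then x a else 0 with hy
    have hyea : ∀ a, y (e a) = x a := by
      intro a
      simp only [hy, he.eq_iff]
      rw [Finset.sum_ite_eq' Finset.univ a x]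
      simp
    have inner : ∀ k, (M *ᵥ y) k = ∑ b : l, M k (e b) * x b := by
      intro k
      simp only [Matrix.mulVec, dotProduct, hy, Finset.mul_sum, mul_ite, mul_zero]
      rw [Finset.sum_comm]
      refine Finset.sum_congr rfl fun b _ => ?_
      rw [Finset.sum_ite_eq Finset.univ (e b) (fun l' => M k l' * x b)]
      simp
    have lhs : star y ⬝ᵥ (M *ᵥ y) = ∑ a : l, x a * ((M *ᵥ y) (e a)) := by
      simp only [dotProduct, Pi.star_apply, star_trivial, hy, Finset.sum_mul, ite_mul,
        zero_mul]
      rw [Finset.sum_comm]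
      refine Finset.sum_congr rfl fun a _ => ?_
      rw [Finset.sum_ite_eq Finset.univ (e a) (fun k => x a * (M *ᵥ y) k)]
      simp [hy]
    have key : star x ⬝ᵥ ((M.submatrix e e) *ᵥ x) = star y ⬝ᵥ (M *ᵥ y) := by
      rw [lhs]
      simp only [dotProduct, Pi.star_apply, star_trivial]
      refine Finset.sum_congr rfl fun a _ => ?_
      rw [inner (e a)]
      simp [Matrix.mulVec, dotProduct]
    have hy0 : y ≠ 0 := by
      obtain ⟨a, ha⟩ := Function.ne_iff.mp hx
      intro h0
      apply ha
      have := hyea a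
      rw [h0] at this
      simpa using this.symm
    rw [key]
    exact hM.dotProduct_mulVec_pos hy0

lemma det_submatrix_eq_principalMinor' {n : ℕ} (S : Matrix (Fin n) (Fin n) ℝ)
    (T : Finset (Fin n)) {m : Type*} [Fintype m] [DecidableEq m] (f : m → Fin n)
    (hinj : Function.Injective f) (hmem : ∀ a, f a ∈ T)
    (hsurj : ∀ t ∈ T, ∃ a, f a = t) :
    (S.submatrix f f).det =
      (S.submatrix (fun a : T => (a : Fin n)) (fun a : T => (a : Fin n))).det := by
  have hbij : Function.Bijective (fun a : m => (⟨f a, hmem a⟩ : T)) :=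
    ⟨fun a b h => hinj (congrArg Subtype.val h),
     fun t => by obtain ⟨a, ha⟩ := hsurj t t.2; exact ⟨a, Subtype.ext ha⟩⟩
  let e := Equiv.ofBijective _ hbij
  have heq : S.submatrix f f =
      (S.submatrix (fun a : T => (a : Fin n)) (fun a : T => (a : Fin n))).submatrix e e := by
    ext a b; rfl
  rw [heq, Matrix.det_submatrix_equiv_self]

/-- Principal minor of `S` on the index set `T`. -/
def principalMinor {n : ℕ} (S : Matrix (Fin n) (Fin n) ℝ) (T : Finset (Fin n)) : ℝ :=
  (S.submatrix (fun a : T => (a : Fin n)) (fun a : T => (a : Fin n))).det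

theorem koteljanskii {n : ℕ} (S : Matrix (Fin n) (Fin n) ℝ)
    (hsymm : S.IsSymm) (hpd : S.PosDef)
    (K : Finset (Fin n)) (i j : Fin n) (hij : i ≠ j) (hi : i ∉ K) (hj : j ∉ K) :
    principalMinor S (insert i K) * principalMinor S (insert j K) ≥
      principalMinor S (insert i (insert j K)) * principalMinor S K := by
  classical
  set p : Fin 2 → Fin n := ![i, j] with hp
  have hp0 : p 0 = i := rfl
  have hp1 : p 1 = j := rfl
  set c : ↥K → Fin n := fun a => (a : Fin n) with hc
  have hcinj : Function.Injective c := fun a b h => Subtype.ext h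
  have hcK : ∀ a : ↥K, c a ∈ K := fun a => a.2
  have hpinj : Function.Injective p := by
    intro a b h
    fin_cases a <;> fin_cases b <;> simp_all [hp0, hp1]
  set A : Matrix ↥K ↥K ℝ := S.submatrix c c with hA
  set Bm : Matrix ↥K (Fin 2) ℝ := S.submatrix c p with hBm
  set Cm : Matrix (Fin 2) ↥K ℝ := S.submatrix p c with hCm
  set D : Matrix (Fin 2) (Fin 2) ℝ := S.submatrix p p with hD
  have hApd : A.PosDef := posDef_submatrix_of_injective hpd c hcinj
  haveI : Invertible A := hApd.isUnit.invertible
  set M2 : Matrix (Fin 2) (Fin 2) ℝ := D - Cm * ⅟A * Bm with hM2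
  -- block decomposition for K ∪ {i,j}
  have hgdet : principalMinor S (insert i (insert j K)) = A.det * M2.det := by
    have hg : Function.Injective (Sum.elim c p) := by
      rintro (a | a) (b | b) h
      · exact congrArg Sum.inl (hcinj h)
      · exfalso
        have h' : c a = p b := h
        have hb : p b = i ∨ p b = j := by fin_cases b <;> simp [hp]
        have hmemb : p b ∈ K := h' ▸ hcK a
        rcases hb with hb | hb
        · exact hi (hb ▸ hmemb)
        · exact hj (hb ▸ hmemb)
      · exfalso
        have h' : p a = c b := h
        have hb : p a = i ∨ p a = j := by fin_cases a <;> simp [hp]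
        have hmemb : p a ∈ K := h' ▸ hcK b
        rcases hb with hb | hb
        · exact hi (hb ▸ hmemb)
        · exact hj (hb ▸ hmemb)
      · exact congrArg Sum.inr (hpinj h)
    have hmem : ∀ a : ↥K ⊕ Fin 2, Sum.elim c p a ∈ insert i (insert j K) := by
      rintro (a | a)
      · simp [Finset.mem_insert, hcK a]
      · fin_cases a <;> simp [hp0, hp1, Finset.mem_insert]
    have hsurj : ∀ t ∈ insert i (insert j K), ∃ a, Sum.elim c p a = t := by
      intro t ht
      rcases Finset.mem_insert.mp ht with rfl | ht
      · exact ⟨Sum.inr 0, hp0⟩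
      rcases Finset.mem_insert.mp ht with rfl | ht
      · exact ⟨Sum.inr 1, hp1⟩
      · exact ⟨Sum.inl ⟨t, ht⟩, rfl⟩
    have hblock : S.submatrix (Sum.elim c p) (Sum.elim c p) = Matrix.fromBlocks A Bm Cm D := by
      ext a b
      rcases a with a | a <;> rcases b with b | b <;> rfl
    rw [principalMinor, ← det_submatrix_eq_principalMinor' S _ _ hg hmem hsurj, hblock,
      Matrix.det_fromBlocks₁₁]
  -- block decomposition for K ∪ {i}
  have hidet : principalMinor S (insert i K) = A.det * M2 0 0 := by
    set q : Unit → Fin n := fun _ => i with hq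
    have hg : Function.Injective (Sum.elim c q) := by
      rintro (a | a) (b | b) h
      · exact congrArg Sum.inl (hcinj h)
      · exact absurd (show i ∈ K from (show c a = i from h) ▸ hcK a) hi
      · exact absurd (show i ∈ K from (show c b = i from h.symm) ▸ hcK b) hi
      · rfl
    have hmem : ∀ a : ↥K ⊕ Unit, Sum.elim c q a ∈ insert i K := by
      rintro (a | a) <;> simp [Finset.mem_insert, hcK, hq]
    have hsurj : ∀ t ∈ insert i K, ∃ a, Sum.elim c q a = t := by
      intro t ht
      rcases Finset.mem_insert.mp ht with rfl | ht
      · exact ⟨Sum.inr (), rfl⟩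
      · exact ⟨Sum.inl ⟨t, ht⟩, rfl⟩
    have hblock : S.submatrix (Sum.elim c q) (Sum.elim c q) =
        Matrix.fromBlocks A (S.submatrix c q) (S.submatrix q c) (S.submatrix q q) := by
      ext a b
      rcases a with a | a <;> rcases b with b | b <;> rfl
    rw [principalMinor, ← det_submatrix_eq_principalMinor' S _ _ hg hmem hsurj, hblock,
      Matrix.det_fromBlocks₁₁]
    congr 1
    rw [Matrix.det_unique]
    simp [hM2, hD, hBm, hCm, Matrix.mul_apply, Matrix.sub_apply, hq, hp0]
  -- block decomposition for K ∪ {j}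
  have hjdet : principalMinor S (insert j K) = A.det * M2 1 1 := by
    set q : Unit → Fin n := fun _ => j with hq
    have hg : Function.Injective (Sum.elim c q) := by
      rintro (a | a) (b | b) h
      · exact congrArg Sum.inl (hcinj h)
      · exact absurd (show j ∈ K from (show c a = j from h) ▸ hcK a) hj
      · exact absurd (show j ∈ K from (show c b = j from h.symm) ▸ hcK b) hj
      · rfl
    have hmem : ∀ a : ↥K ⊕ Unit, Sum.elim c q a ∈ insert j K := by
      rintro (a | a) <;> simp [Finset.mem_insert, hcK, hq]
    have hsurj : ∀ t ∈ insert j K, ∃ a, Sum.elim c q a = t := by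
      intro t ht
      rcases Finset.mem_insert.mp ht with rfl | ht
      · exact ⟨Sum.inr (), rfl⟩
      · exact ⟨Sum.inl ⟨t, ht⟩, rfl⟩
    have hblock : S.submatrix (Sum.elim c q) (Sum.elim c q) =
        Matrix.fromBlocks A (S.submatrix c q) (S.submatrix q c) (S.submatrix q q) := by
      ext a b
      rcases a with a | a <;> rcases b with b | b <;> rfl
    rw [principalMinor, ← det_submatrix_eq_principalMinor' S _ _ hg hmem hsurj, hblock,
      Matrix.det_fromBlocks₁₁]
    congr 1
    rw [Matrix.det_unique]
    simp [hM2, hD, hBm, hCm, Matrix.mul_apply, Matrix.sub_apply, hq, hp1]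
  have hKdet : principalMinor S K = A.det := rfl
  -- symmetry of M2
  have hSsymm : S.transpose = S := hsymm
  have hAsymm : A.transpose = A := by
    rw [hA, Matrix.transpose_submatrix, hSsymm]
  have hIsymm : (⅟A).transpose = ⅟A := by
    rw [Matrix.invOf_eq_nonsing_inv, Matrix.transpose_nonsing_inv, hAsymm]
  have hM2symm : M2.transpose = M2 := by
    rw [hM2, Matrix.transpose_sub, Matrix.transpose_mul, Matrix.transpose_mul, hIsymm]
    rw [hD, hBm, hCm, Matrix.transpose_submatrix, Matrix.transpose_submatrix,
      Matrix.transpose_submatrix, hSsymm, Matrix.mul_assoc]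
  have h10 : M2 1 0 = M2 0 1 := by
    conv_lhs => rw [← hM2symm]
    rfl
  rw [hgdet, hidet, hjdet, hKdet, Matrix.det_fin_two, h10]
  nlinarith [sq_nonneg (M2 0 1), sq_nonneg A.det, sq_nonneg (A.det * M2 0 1)]
end

section
/- Let Σ be a real symmetric positive definite n×n matrix, K ⊆ {1,…,n}, and i, j distinct indices not in K. Equality det(Σ_{K∪{i}})·det(Σ_{K∪{j}}) = det(Σ_{K∪{i,j}})·det(Σ_K) holds if and only if the almost-principal minor [i⊥j|K] of Σ (the subdeterminant with row indices {i}∪K and column indices {j}∪K) vanishes. -/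
/-- Almost-principal minor `[i ⫫ j | K]`: the subdeterminant of `S` with row indices
`{i} ∪ K` and column indices `{j} ∪ K`. -/
def almostPrincipalMinor {n : ℕ} (S : Matrix (Fin n) (Fin n) ℝ)
    (i j : Fin n) (K : Finset (Fin n)) : ℝ :=
  (S.submatrix (Sum.elim (fun _ : Unit => i) (fun k : K => (k : Fin n)))
               (Sum.elim (fun _ : Unit => j) (fun k : K => (k : Fin n)))).det

open Matrix in
lemma posDef_submatrix_inj {m n : Type*} [Fintype m] [Fintype n] [DecidableEq m] [DecidableEq n]
    {M : Matrix n n ℝ} (hM : M.PosDef) {e : m → n} (he : Function.Injective e) :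
    (M.submatrix e e).PosDef := by
  rw [posDef_iff_dotProduct_mulVec]
  refine ⟨?_, ?_⟩
  · have := hM.1
    ext a b
    simp only [conjTranspose_apply, submatrix_apply, star_trivial]
    exact congrFun (congrFun this (e a)) (e b) ▸ rfl
  · intro x hx
    have hM' : M.submatrix e e =
        (1 : Matrix n n ℝ).submatrix e id * M * (1 : Matrix n n ℝ).submatrix id e := by
      rw [(by simp : M = 1 * M * 1), Matrix.submatrix_mul (he₂ := Function.bijective_id),
        Matrix.submatrix_mul (he₂ := Function.bijective_id), Matrix.submatrix_id_id]
      simp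
    set y : n → ℝ := ((1 : Matrix n n ℝ).submatrix id e) *ᵥ x with hy
    have hyk : ∀ k, y (e k) = x k := by
      intro k
      simp only [hy, mulVec, dotProduct, submatrix_apply, id_eq, one_apply]
      rw [Finset.sum_congr rfl (fun l _ => by rw [show (if e k = e l then (1:ℝ) else 0) = if k = l then 1 else 0 by simp [he.eq_iff]])]
      simp
    have hyne : y ≠ 0 := by
      obtain ⟨k, hk⟩ := Function.ne_iff.mp hx
      intro h
      exact hk (by simpa [hyk k] using congrFun h (e k))
    have := hM.dotProduct_mulVec_pos hyne
    have key : star x ⬝ᵥ (M.submatrix e e) *ᵥ x = star y ⬝ᵥ M *ᵥ y := by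
      rw [hM', ← Matrix.mulVec_mulVec, ← Matrix.mulVec_mulVec, Matrix.dotProduct_mulVec,
        ← hy]
      congr 1
      simp only [star_trivial]
      rw [show (1 : Matrix n n ℝ).submatrix e id = ((1 : Matrix n n ℝ).submatrix id e)ᵀ by
        rw [Matrix.transpose_submatrix, Matrix.transpose_one], Matrix.vecMul_transpose, hy]
    rw [key]
    exact this

theorem koteljanskii_equality_iff {n : ℕ} (S : Matrix (Fin n) (Fin n) ℝ)
    (hsymm : S.IsSymm) (hpd : S.PosDef)
    (K : Finset (Fin n)) (i j : Fin n) (hij : i ≠ j) (hi : i ∉ K) (hj : j ∉ K) :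
    principalMinor S (insert i K) * principalMinor S (insert j K) =
      principalMinor S (insert i (insert j K)) * principalMinor S K ↔
    almostPrincipalMinor S i j K = 0 := by
  classical
  set A : Matrix K K ℝ :=
    S.submatrix (fun k : K => (k : Fin n)) (fun k : K => (k : Fin n)) with hA
  have hApd : A.PosDef := posDef_submatrix_inj hpd Subtype.coe_injective
  haveI : Invertible A := Matrix.invertibleOfIsUnitDet A hApd.det_pos.ne'.isUnit
  have hd : A.det ≠ 0 := hApd.det_pos.ne'
  -- Schur entry
  set s : Fin n → Fin n → ℝ := fun x y =>
    S x y - ∑ l : K, (∑ k : K, S x (k : Fin n) * A⁻¹ k l) * S (l : Fin n) y with hs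
  -- one-row Schur formula
  have schur1 : ∀ x y : Fin n,
      (Matrix.fromBlocks (Matrix.of fun (_ : Unit) (_ : Unit) => S x y)
        (Matrix.of fun (_ : Unit) (k : K) => S x (k : Fin n))
        (Matrix.of fun (k : K) (_ : Unit) => S (k : Fin n) y) A).det
      = A.det * s x y := by
    intro x y
    rw [Matrix.det_fromBlocks₂₂]
    congr 1
    rw [Matrix.det_unique]
    simp [Matrix.mul_apply, Matrix.sub_apply, Matrix.invOf_eq_nonsing_inv, hs]
  -- almost principal minor
  have hapm : almostPrincipalMinor S i j K = A.det * s i j := by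
    rw [← schur1]
    unfold almostPrincipalMinor
    congr 1
    ext a b
    rcases a with a | a <;> rcases b with b | b <;> rfl
  -- principal minor of a single insert
  have hins : ∀ x : Fin n, x ∉ K → principalMinor S (insert x K) = A.det * s x x := by
    intro x hx
    rw [← schur1]
    have hb : Function.Bijective (Sum.elim (fun _ : Unit => (⟨x, Finset.mem_insert_self x K⟩ : ↥(insert x K)))
        (fun k : K => (⟨(k : Fin n), Finset.mem_insert_of_mem k.2⟩ : ↥(insert x K)))) := by
      constructor
      · rintro (a | a) (b | b) hab <;>
          simp only [Sum.elim_inl, Sum.elim_inr, Subtype.mk.injEq] at hab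
        · rfl
        · exact absurd (hab ▸ b.2) hx
        · exact absurd (hab ▸ a.2 : x ∈ K) hx
        · exact congrArg _ (Subtype.ext hab)
      · rintro ⟨a, ha⟩
        rcases Finset.mem_insert.mp ha with h | h
        · exact ⟨Sum.inl (), by simp [h]⟩
        · exact ⟨Sum.inr ⟨a, h⟩, rfl⟩
    set e := Equiv.ofBijective _ hb with he
    rw [show principalMinor S (insert x K) =
        ((S.submatrix (fun a : ↥(insert x K) => (a : Fin n))
           (fun a : ↥(insert x K) => (a : Fin n))).submatrix e e).det from
      (Matrix.det_submatrix_equiv_self e _).symm]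
    congr 1
    ext a b
    rcases a with a | a <;> rcases b with b | b <;> rfl
  -- principal minor of the double insert
  have hins2 : principalMinor S (insert i (insert j K)) =
      A.det * (s i i * s j j - s i j * s j i) := by
    have hb : Function.Bijective (Sum.elim
        (fun x : Fin 2 => (⟨![i, j] x, by fin_cases x <;> simp⟩ : ↥(insert i (insert j K))))
        (fun k : K => (⟨(k : Fin n),
          Finset.mem_insert_of_mem (Finset.mem_insert_of_mem k.2)⟩ : ↥(insert i (insert j K))))) := by
      constructor
      · rintro (a | a) (b | b) hab <;>
          simp only [Sum.elim_inl, Sum.elim_inr, Subtype.mk.injEq] at hab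
        · fin_cases a <;> fin_cases b <;> simp_all <;> exact absurd hab.symm hij
        · fin_cases a <;> simp_all <;> first | exact hi (hab ▸ b.2) | exact hj (hab ▸ b.2)
        · fin_cases b <;> simp_all <;> first | exact hi (hab ▸ a.2) | exact hj (hab ▸ a.2)
        · exact congrArg _ (Subtype.ext hab)
      · rintro ⟨a, ha⟩
        rcases Finset.mem_insert.mp ha with h | h
        · exact ⟨Sum.inl 0, by simp [h]⟩
        · rcases Finset.mem_insert.mp h with h | h
          · exact ⟨Sum.inl 1, by simp [h]⟩
          · exact ⟨Sum.inr ⟨a, h⟩, rfl⟩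
    set e := Equiv.ofBijective _ hb with he
    rw [show principalMinor S (insert i (insert j K)) =
        ((S.submatrix (fun a : ↥(insert i (insert j K)) => (a : Fin n))
           (fun a : ↥(insert i (insert j K)) => (a : Fin n))).submatrix e e).det from
      (Matrix.det_submatrix_equiv_self e _).symm]
    have hblocks : ((S.submatrix (fun a : ↥(insert i (insert j K)) => (a : Fin n))
           (fun a : ↥(insert i (insert j K)) => (a : Fin n))).submatrix e e) =
        Matrix.fromBlocks
          (Matrix.of fun x y : Fin 2 => S (![i, j] x) (![i, j] y))
          (Matrix.of fun (x : Fin 2) (k : K) => S (![i, j] x) (k : Fin n))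
          (Matrix.of fun (k : K) (x : Fin 2) => S (k : Fin n) (![i, j] x)) A := by
      ext a b
      rcases a with a | a <;> rcases b with b | b <;> rfl
    rw [hblocks, Matrix.det_fromBlocks₂₂]
    congr 1
    rw [Matrix.det_fin_two]
    simp only [Matrix.sub_apply, Matrix.of_apply, Matrix.mul_apply,
      Matrix.invOf_eq_nonsing_inv, hs]
    norm_num [Matrix.cons_val_zero, Matrix.cons_val_one]
  -- symmetry of the Schur complement
  have hsym : s j i = s i j := by
    have hSa : ∀ a b : Fin n, S a b = S b a := fun a b => (hsymm.apply a b).symm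
    have hAs : A.transpose = A := by
      ext a b
      simp only [Matrix.transpose_apply, hA, Matrix.submatrix_apply]
      exact hSa _ _
    have hAinv : ∀ k l : K, A⁻¹ k l = A⁻¹ l k := by
      intro k l
      calc A⁻¹ k l = (A.transpose)⁻¹ k l := by rw [hAs]
        _ = (A⁻¹).transpose k l := by rw [Matrix.transpose_nonsing_inv]
        _ = A⁻¹ l k := rfl
    simp only [hs]
    rw [hSa j i]
    congr 1
    simp only [Finset.sum_mul]
    rw [Finset.sum_comm]
    refine Finset.sum_congr rfl fun l _ => Finset.sum_congr rfl fun k _ => ?_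
    rw [hSa j (l : Fin n), hSa (k : Fin n) i, hAinv l k]
    ring
  have hK : principalMinor S K = A.det := rfl
  rw [hapm, hins i hi, hins j hj, hins2, hK, hsym]
  constructor
  · intro h
    have h2 : (A.det * s i j) ^ 2 = 0 := by linear_combination h
    exact pow_eq_zero_iff (two_ne_zero) |>.mp h2
  · intro h
    have : s i j = 0 := by
      rcases mul_eq_zero.mp h with h' | h'
      · exact absurd h' hd
      · exact h'
    rw [this]
    ring
end

section
/- For a general plane quadric in the form p₁² = λ·p₀·p₂ with λ = 4, the maximum likelihood estimator is a rational function of the data: for generic positive data (u₀,u₁,u₂), the system consisting of p₁² − 4p₀p₂ = 0 and the critical equations of the likelihood function p₀^{u₀}p₁^{u₁}p₂^{u₂}/(p₀+p₁+p₂)^{u₀+u₁+u₂} on this curve has exactly one solution with p₀p₁p₂(p₀+p₁+p₂) ≠ 0 (up to scaling), namely ((2u₀+u₁)² : 2(2u₀+u₁)(u₁+2u₂) : (u₁+2u₂)²). -/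
theorem hardy_weinberg_ml_degree_one (u0 u1 u2 : ℝ)
    (h0 : 0 < u0) (h1 : 0 < u1) (h2 : 0 < u2) :
    let q : Fin 3 → ℂ := ![((2 * u0 + u1 : ℝ) : ℂ) ^ 2,
      2 * ((2 * u0 + u1 : ℝ) : ℂ) * ((u1 + 2 * u2 : ℝ) : ℂ), ((u1 + 2 * u2 : ℝ) : ℂ) ^ 2]
    let crit : (Fin 3 → ℂ) → Prop := fun p =>
      p 1 ^ 2 - 4 * p 0 * p 2 = 0 ∧
      (Matrix.of ![![((u0 : ℝ) : ℂ), p 0, p 0 * (-4 * p 2)],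
                   ![((u1 : ℝ) : ℂ), p 1, p 1 * (2 * p 1)],
                   ![((u2 : ℝ) : ℂ), p 2, p 2 * (-4 * p 0)]]).det = 0 ∧
      p 0 * p 1 * p 2 * (p 0 + p 1 + p 2) ≠ 0
    crit q ∧ ∀ p : Fin 3 → ℂ, crit p → ∃ c : ℂ, c ≠ 0 ∧ p = c • q := by
  intro q crit
  have haC : ((2 * u0 + u1 : ℝ) : ℂ) ≠ 0 :=
    Complex.ofReal_ne_zero.mpr (by positivity)
  have hbC : ((u1 + 2 * u2 : ℝ) : ℂ) ≠ 0 :=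
    Complex.ofReal_ne_zero.mpr (by positivity)
  have hsC : ((2 * u0 + u1 : ℝ) : ℂ) + ((u1 + 2 * u2 : ℝ) : ℂ) ≠ 0 := by
    rw [← Complex.ofReal_add]
    exact Complex.ofReal_ne_zero.mpr (by positivity)
  have h2ab : (2 * ((2 * u0 + u1 : ℝ) : ℂ) * ((u1 + 2 * u2 : ℝ) : ℂ)) ≠ 0 :=
    mul_ne_zero (mul_ne_zero two_ne_zero haC) hbC
  constructor
  · refine ⟨?_, ?_, ?_⟩
    · show q 1 ^ 2 - 4 * q 0 * q 2 = 0
      simp only [q, Matrix.cons_val_zero, Matrix.cons_val_one, Matrix.head_cons,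
        Matrix.cons_val_two, Matrix.tail_cons]
      ring
    · rw [Matrix.det_fin_three]
      simp only [q, Matrix.of_apply, Matrix.cons_val', Matrix.cons_val_zero,
        Matrix.cons_val_one, Matrix.head_cons, Matrix.cons_val_two, Matrix.tail_cons,
        Matrix.empty_val', Matrix.cons_val_fin_one, Matrix.head_fin_const]
      push_cast
      ring
    · show q 0 * q 1 * q 2 * (q 0 + q 1 + q 2) ≠ 0
      have e : q 0 * q 1 * q 2 * (q 0 + q 1 + q 2) =
          2 * ((2 * u0 + u1 : ℝ) : ℂ) ^ 3 * ((u1 + 2 * u2 : ℝ) : ℂ) ^ 3 *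
            (((2 * u0 + u1 : ℝ) : ℂ) + ((u1 + 2 * u2 : ℝ) : ℂ)) ^ 2 := by
        simp only [q, Matrix.cons_val_zero, Matrix.cons_val_one, Matrix.head_cons,
          Matrix.cons_val_two, Matrix.tail_cons]
        ring
      rw [e]
      exact mul_ne_zero (mul_ne_zero (mul_ne_zero two_ne_zero (pow_ne_zero _ haC))
        (pow_ne_zero _ hbC)) (pow_ne_zero _ hsC)
  · intro p hp
    obtain ⟨hF, hdet, hne⟩ := hp
    set A := p 0 with hA
    set B := p 1 with hB
    set C := p 2 with hC
    set U0 : ℂ := ((u0 : ℝ) : ℂ) with hU0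
    set U1 : ℂ := ((u1 : ℝ) : ℂ) with hU1
    set U2 : ℂ := ((u2 : ℝ) : ℂ) with hU2
    have hBne : B ≠ 0 := by
      intro h; exact hne (by rw [h]; ring)
    have hSne : A + B + C ≠ 0 := by
      intro h; exact hne (by rw [h]; ring)
    rw [Matrix.det_fin_three] at hdet
    simp only [Matrix.of_apply, Matrix.cons_val', Matrix.cons_val_zero,
      Matrix.cons_val_one, Matrix.head_cons, Matrix.cons_val_two, Matrix.tail_cons,
      Matrix.empty_val', Matrix.cons_val_fin_one, Matrix.head_fin_const] at hdet
    have hL : U1 * A + 2 * U2 * A + U2 * B - U0 * B - 2 * U0 * C - U1 * C = 0 := by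
      have h2 : B ^ 2 * (U1 * A + 2 * U2 * A + U2 * B - U0 * B - 2 * U0 * C - U1 * C) = 0 := by
        linear_combination hdet - (U1 * C - U2 * B + U0 * B - U1 * A) * hF
      rcases mul_eq_zero.mp h2 with h | h
      · exact absurd h (pow_ne_zero 2 hBne)
      · exact h
    have hR1 : 2 * (U1 + 2 * U2) * A - (2 * U0 + U1) * B = 0 := by
      have h2 : (2 * (U1 + 2 * U2) * A - (2 * U0 + U1) * B) * (A + B + C) = 0 := by
        linear_combination (-(2 * U0 + U1 + U1 + 2 * U2) / 2) * hF + (2 * A + B) * hL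
      rcases mul_eq_zero.mp h2 with h | h
      · exact h
      · exact absurd h hSne
    have hR2 : 2 * (2 * U0 + U1) * C - (U1 + 2 * U2) * B = 0 := by
      have h2 : (2 * (2 * U0 + U1) * C - (U1 + 2 * U2) * B) * (A + B + C) = 0 := by
        linear_combination (-(2 * U0 + U1 + U1 + 2 * U2) / 2) * hF - (2 * C + B) * hL
      rcases mul_eq_zero.mp h2 with h | h
      · exact h
      · exact absurd h hSne
    refine ⟨B / (2 * ((2 * u0 + u1 : ℝ) : ℂ) * ((u1 + 2 * u2 : ℝ) : ℂ)),
      div_ne_zero hBne h2ab, ?_⟩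
    funext i
    fin_cases i
    · show p 0 = _ * q 0
      simp only [Pi.smul_apply, smul_eq_mul, q, Matrix.cons_val_zero]
      rw [← hA, div_mul_eq_mul_div, eq_comm, div_eq_iff h2ab]
      push_cast
      linear_combination (-(2 * U0 + U1)) * hR1
    · show p 1 = _ * q 1
      simp only [Pi.smul_apply, smul_eq_mul, q, Matrix.cons_val_one, Matrix.head_cons]
      rw [← hB, Matrix.cons_val_zero, div_mul_cancel₀ B h2ab]
    · show p 2 = _ * q 2
      simp only [Pi.smul_apply, smul_eq_mul, q, Matrix.cons_val_two, Matrix.tail_cons,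
        Matrix.head_cons]
      rw [← hC, div_mul_eq_mul_div, eq_comm, div_eq_iff h2ab]
      push_cast
      linear_combination (-(U1 + 2 * U2)) * hR2
end

section
/- The Strassen invariant vanishes on tensors of rank at most 3: if A, B, C are 3×3 complex matrices of the form A = Σ_{s=1}^{3} x_s u_s v_sᵀ, B = Σ_{s=1}^{3} y_s u_s v_sᵀ, C = Σ_{s=1}^{3} z_s u_s v_sᵀ, then det(A·adj(B)·C − C·adj(B)·A) = 0. -/
set_option maxHeartbeats 4000000


theorem strassen_vanishes_on_rank_three (u v : Fin 3 → (Fin 3 → ℂ)) (x y z : Fin 3 → ℂ)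
    (A B C : Matrix (Fin 3) (Fin 3) ℂ)
    (hA : A = ∑ s : Fin 3, x s • Matrix.vecMulVec (u s) (v s))
    (hB : B = ∑ s : Fin 3, y s • Matrix.vecMulVec (u s) (v s))
    (hC : C = ∑ s : Fin 3, z s • Matrix.vecMulVec (u s) (v s)) :
    (A * B.adjugate * C - C * B.adjugate * A).det = 0 := by
  have h : A * B.adjugate * C - C * B.adjugate * A = 0 := by
    subst hA hB hC
    ext i j
    simp only [Matrix.adjugate_fin_three, Matrix.mul_apply, Matrix.sub_apply, Matrix.zero_apply,
      Matrix.sum_apply, Matrix.smul_apply, Matrix.add_apply, Matrix.vecMulVec_apply,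
      Fin.sum_univ_three, Matrix.of_apply, Matrix.cons_val', Matrix.cons_val_zero,
      Matrix.cons_val_one, Matrix.head_cons, Matrix.empty_val', Matrix.cons_val_fin_one,
      Matrix.head_fin_const, Matrix.cons_val_two, Matrix.tail_cons, smul_eq_mul]
    ring
  rw [h]
  simp
end
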